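/- arXiv:2601.12772 — 4 statements merged into one kernel-verified Lean document; each statement's English description precedes it below -/
import Mathlib

section
/- A positive integer n₀ and a sequence m₀ = n₀, m₁, …, m_y with m_{k+1}·2^{s_{k+1}} = 3·m_k + 1 satisfies m_y = m₀ if and only if n₀ · (2^x - 3^y) = Σ_{k=0}^{y-1} 3^{y-1-k} · 2^{σ(k)}, where σ(y) = x. -/
theorem cycle_equation_iff (x y : ℕ) (hy : 1 ≤ y) (σ : ℕ → ℕ) (m : ℕ → ℤ) (n₀ : ℤ)
    (hn₀ : 0 < n₀) (hmono : StrictMono σ) (h0 : σ 0 = 0) (hx : σ y = x)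
    (hm0 : m 0 = n₀)
    (hrec : ∀ k < y, m (k + 1) * 2 ^ (σ (k + 1) - σ k) = 3 * m k + 1) :
    m y = m 0 ↔
      n₀ * ((2 : ℤ) ^ x - 3 ^ y) = ∑ k ∈ Finset.range y, 3 ^ (y - 1 - k) * 2 ^ σ k := by
  have key : ∀ k, k ≤ y →
      m k * 2 ^ (σ k) = 3 ^ k * n₀ + ∑ j ∈ Finset.range k, 3 ^ (k - 1 - j) * 2 ^ σ j := by
    intro k
    induction k with
    | zero => intro _; simp [h0, hm0]
    | succ k ih =>
      intro hk
      have hky : k < y := Nat.lt_of_succ_le hk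
      have hσ : σ (k + 1) = (σ (k + 1) - σ k) + σ k :=
        (Nat.sub_add_cancel (hmono (Nat.lt_succ_self k)).le).symm
      calc m (k + 1) * 2 ^ (σ (k + 1))
          = (m (k + 1) * 2 ^ (σ (k + 1) - σ k)) * 2 ^ (σ k) := by
            conv_lhs => rw [hσ]
            rw [pow_add, ← mul_assoc]
        _ = (3 * m k + 1) * 2 ^ (σ k) := by rw [hrec k hky]
        _ = 3 * (m k * 2 ^ (σ k)) + 2 ^ (σ k) := by ring
        _ = 3 * (3 ^ k * n₀ + ∑ j ∈ Finset.range k, 3 ^ (k - 1 - j) * 2 ^ σ j) + 2 ^ (σ k) := by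
            rw [ih hky.le]
        _ = 3 ^ (k + 1) * n₀ + ∑ j ∈ Finset.range (k + 1), 3 ^ (k + 1 - 1 - j) * 2 ^ σ j := by
            rw [mul_add, Finset.mul_sum]
            have h1 : ∀ j ∈ Finset.range k,
                3 * ((3 : ℤ) ^ (k - 1 - j) * 2 ^ σ j) = 3 ^ (k + 1 - 1 - j) * 2 ^ σ j := by
              intro j hj
              have hj' : j < k := Finset.mem_range.mp hj
              have : k + 1 - 1 - j = (k - 1 - j) + 1 := by omega
              rw [this, pow_succ]
              ring
            rw [Finset.sum_congr rfl h1, Finset.sum_range_succ]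
            simp [pow_succ]
            ring
  have hkey := key y le_rfl
  rw [hx] at hkey
  constructor
  · intro h
    rw [h, hm0] at hkey
    linarith [hkey]
  · intro h
    have h2 : m y * 2 ^ x = n₀ * 2 ^ x := by linarith [hkey]
    have := mul_right_cancel₀ (pow_ne_zero x (two_ne_zero : (2:ℤ) ≠ 0)) h2
    rw [this, hm0]
end

section
/- Let S ⊆ ℕ² be a linear set, i.e., S = {b + Σᵢ λᵢ vᵢ : λᵢ ∈ ℕ} for some base vector b ∈ ℕ² and finitely many period vectors v₁, …, v_k ∈ ℕ². Then there exists M ≥ 1 such that for every x ∈ ℕ, the fiber S_x = {y : (x, y) ∈ S} is eventually periodic with some period dividing M (i.e., there exists N such that for all y ≥ N, y ∈ S_x ↔ y + M ∈ S_x). -/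
/-- A linear subset of ℕ²: a base vector plus ℕ-combinations of finitely many period vectors. -/
def IsLinear (S : Set (ℕ × ℕ)) : Prop :=
  ∃ (b : ℕ × ℕ) (k : ℕ) (v : Fin k → ℕ × ℕ),
    S = {p | ∃ l : Fin k → ℕ, p = b + ∑ i, l i • v i}

theorem linear_fiber_eventually_periodic (S : Set (ℕ × ℕ)) (hS : IsLinear S) :
    ∃ M : ℕ, 1 ≤ M ∧ ∀ x : ℕ, ∃ N : ℕ, ∀ y ≥ N,
      ((x, y) ∈ S ↔ (x, y + M) ∈ S) := by
  obtain ⟨b, k, v, rfl⟩ := hS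
  classical
  set Vpos : Finset (Fin k) := Finset.univ.filter (fun i => (v i).1 = 0 ∧ 0 < (v i).2)
    with hVpos
  set M : ℕ := ∏ i ∈ Vpos, (v i).2 with hMdef
  have hM1 : 1 ≤ M := by
    rw [hMdef, Nat.one_le_iff_ne_zero]
    rw [Finset.prod_ne_zero_iff]
    intro i hi
    exact ((Finset.mem_filter.mp hi).2.2).ne'
  have hmem : ∀ x y : ℕ,
      ((x, y) ∈ {p : ℕ × ℕ | ∃ l : Fin k → ℕ, p = b + ∑ i, l i • v i} ↔
        ∃ l : Fin k → ℕ, x = b.1 + ∑ i, l i * (v i).1 ∧ y = b.2 + ∑ i, l i * (v i).2) := by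
    intro x y
    constructor
    · rintro ⟨l, hl⟩
      refine ⟨l, ?_, ?_⟩
      · have := congrArg Prod.fst hl
        simpa [Prod.fst_sum] using this
      · have := congrArg Prod.snd hl
        simpa [Prod.snd_sum] using this
    · rintro ⟨l, h1, h2⟩
      refine ⟨l, ?_⟩
      ext
      · simpa [Prod.fst_sum] using h1
      · simpa [Prod.snd_sum] using h2
  refine ⟨M, hM1, fun x => ?_⟩
  set C : ℕ := x * ∑ i, (v i).2 with hCdef
  refine ⟨b.2 + C + k * M + 1, fun y hy => ?_⟩
  -- key bound: the non-vertical part of the second coordinate is at most C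
  have hbound : ∀ l : Fin k → ℕ, x = b.1 + ∑ i, l i * (v i).1 →
      ∑ i ∈ Vposᶜ, l i * (v i).2 ≤ C := by
    intro l hx
    have hterm : ∀ i ∈ Vposᶜ, l i * (v i).2 ≤ x * (v i).2 := by
      intro i hi
      rcases Nat.eq_zero_or_pos (v i).2 with h2 | h2
      · simp [h2]
      · have h1 : 0 < (v i).1 := by
          by_contra h
          push_neg at h
          have : i ∈ Vpos := by
            rw [hVpos]
            simp [Nat.le_zero.mp h, h2]
          simp [this] at hi
        have hle : l i ≤ x := by
          have h3 : l i * (v i).1 ≤ ∑ j, l j * (v j).1 :=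
            Finset.single_le_sum (f := fun j => l j * (v j).1)
              (fun j _ => Nat.zero_le _) (Finset.mem_univ i)
          calc l i ≤ l i * (v i).1 := Nat.le_mul_of_pos_right _ h1
            _ ≤ ∑ j, l j * (v j).1 := h3
            _ ≤ x := by omega
        exact Nat.mul_le_mul_right _ hle
    calc ∑ i ∈ Vposᶜ, l i * (v i).2 ≤ ∑ i ∈ Vposᶜ, x * (v i).2 :=
          Finset.sum_le_sum hterm
      _ ≤ ∑ i : Fin k, x * (v i).2 :=
          Finset.sum_le_sum_of_subset (Finset.subset_univ _)
      _ = C := by rw [hCdef, Finset.mul_sum]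
  rw [hmem, hmem]
  constructor
  · rintro ⟨l, hx, hy2⟩
    rcases Vpos.eq_empty_or_nonempty with hVe | ⟨i₁, hi₁⟩
    · -- no positive vertical generator: y is too small, contradiction
      exfalso
      have hsplit : ∑ i, l i * (v i).2 = ∑ i ∈ Vposᶜ, l i * (v i).2 := by
        rw [← Finset.sum_add_sum_compl Vpos (fun i => l i * (v i).2), hVe]
        simp
      have := hbound l hx
      omega
    · -- pump up generator i₁
      have hi₁' := Finset.mem_filter.mp hi₁
      have hdvd : (v i₁).2 ∣ M := Finset.dvd_prod_of_mem _ hi₁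
      set d : ℕ := M / (v i₁).2 with hd
      refine ⟨fun i => l i + if i = i₁ then d else 0, ?_, ?_⟩
      · rw [hx]
        congr 1
        apply Finset.sum_congr rfl
        intro i _
        rcases eq_or_ne i i₁ with rfl | hne
        · simp [hi₁'.2.1]
        · simp [hne]
      · have hsum : ∑ i, (l i + if i = i₁ then d else 0) * (v i).2
            = (∑ i, l i * (v i).2) + d * (v i₁).2 := by
          have hterm : ∀ i, (l i + if i = i₁ then d else 0) * (v i).2
              = l i * (v i).2 + (if i = i₁ then d * (v i).2 else 0) := by
            intro i
            by_cases h : i = i₁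
            · subst h; simp [add_mul]
            · simp [h]
          simp only [hterm, Finset.sum_add_distrib]
          congr 1
          simp
        have hdg : d * (v i₁).2 = M := Nat.div_mul_cancel hdvd
        rw [hsum, hdg]
        omega
  · rintro ⟨l, hx, hy2⟩
    -- find a vertical generator used many times
    have hex : ∃ i₀ ∈ Vpos, M ≤ l i₀ * (v i₀).2 := by
      by_contra h
      push_neg at h
      have h1 : ∑ i ∈ Vpos, l i * (v i).2 ≤ k * M := by
        calc ∑ i ∈ Vpos, l i * (v i).2 ≤ ∑ _i ∈ Vpos, M :=
              Finset.sum_le_sum (fun i hi => le_of_lt (h i hi))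
          _ = Vpos.card * M := by rw [Finset.sum_const, smul_eq_mul]
          _ ≤ k * M := by
              apply Nat.mul_le_mul_right
              simpa using Finset.card_le_card (Finset.subset_univ Vpos)
      have h2 := hbound l hx
      have h3 : ∑ i, l i * (v i).2
          = ∑ i ∈ Vpos, l i * (v i).2 + ∑ i ∈ Vposᶜ, l i * (v i).2 :=
        (Finset.sum_add_sum_compl Vpos _).symm
      omega
    obtain ⟨i₀, hi₀, hMle⟩ := hex
    have hi₀' := Finset.mem_filter.mp hi₀
    have hdvd : (v i₀).2 ∣ M := Finset.dvd_prod_of_mem _ hi₀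
    set d : ℕ := M / (v i₀).2 with hd
    have hdg : d * (v i₀).2 = M := Nat.div_mul_cancel hdvd
    have hdle : d ≤ l i₀ := by
      have hpos : 0 < (v i₀).2 := hi₀'.2.2
      have : d * (v i₀).2 ≤ l i₀ * (v i₀).2 := by omega
      exact Nat.le_of_mul_le_mul_right this hpos
    refine ⟨fun i => if i = i₀ then l i₀ - d else l i, ?_, ?_⟩
    · rw [hx]
      congr 1
      apply Finset.sum_congr rfl
      intro i _
      rcases eq_or_ne i i₀ with rfl | hne
      · simp [hi₀'.2.1]
      · simp [hne]
    · have e1 : ∑ i, (if i = i₀ then l i₀ - d else l i) * (v i).2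
          = (l i₀ - d) * (v i₀).2 + ∑ i ∈ Finset.univ.erase i₀, l i * (v i).2 := by
        rw [← Finset.add_sum_erase _ _ (Finset.mem_univ i₀)]
        simp only [if_pos rfl]
        congr 1
        apply Finset.sum_congr rfl
        intro i hi
        rw [if_neg (Finset.ne_of_mem_erase hi)]
      have e2 : ∑ i, l i * (v i).2
          = l i₀ * (v i₀).2 + ∑ i ∈ Finset.univ.erase i₀, l i * (v i).2 :=
        (Finset.add_sum_erase _ _ (Finset.mem_univ i₀)).symm
      have e3 : (l i₀ - d) * (v i₀).2 + M = l i₀ * (v i₀).2 := by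
        rw [Nat.sub_mul, hdg]
        omega
      show y = b.2 + ∑ i, (if i = i₀ then l i₀ - d else l i) * (v i).2
      rw [e1]
      rw [e2] at hy2
      omega
end

section
/- Let S ⊆ ℕ² be semilinear (a finite union of linear sets). Then there exists M ≥ 1 such that for every x ∈ ℕ, the fiber S_x = {y : (x,y) ∈ S} is eventually periodic with period M. Consequently, if the minimal eventual periods of the fibers of a set S ⊆ ℕ² are unbounded, then S is not semilinear. -/
/-- A semilinear set is a finite union of linear sets. -/
def IsSemilinear (S : Set (ℕ × ℕ)) : Prop :=
  ∃ (n : ℕ) (T : Fin n → Set (ℕ × ℕ)), (∀ i, IsLinear (T i)) ∧ S = ⋃ i, T i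

/-- `T` is eventually periodic with period `M`. -/
def EvPeriodic (T : Set ℕ) (M : ℕ) : Prop :=
  ∃ N : ℕ, ∀ y ≥ N, (y ∈ T ↔ y + M ∈ T)

lemma evp_mul {T : Set ℕ} {m : ℕ} (h : EvPeriodic T m) (c : ℕ) :
    EvPeriodic T (m * c) := by
  obtain ⟨N, hN⟩ := h
  refine ⟨N, fun y hy => ?_⟩
  induction c with
  | zero => simp
  | succ c ih =>
    have h1 : y + m * (c + 1) = (y + m * c) + m := by ring
    rw [h1]
    exact ih.trans (hN (y + m * c) (by omega))

lemma linear_fiber {S : Set (ℕ × ℕ)} (h : IsLinear S) :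
    ∃ M : ℕ, 1 ≤ M ∧ ∀ x : ℕ, EvPeriodic {y | (x, y) ∈ S} M := by
  obtain ⟨b, k, v, rfl⟩ := h
  have mem_iff : ∀ x y : ℕ,
      ((x, y) ∈ {p : ℕ × ℕ | ∃ l : Fin k → ℕ, p = b + ∑ i, l i • v i}) ↔
      ∃ l : Fin k → ℕ, x = b.1 + ∑ i, l i * (v i).1 ∧ y = b.2 + ∑ i, l i * (v i).2 := by
    intro x y
    simp only [Set.mem_setOf_eq, Prod.ext_iff, Prod.fst_add, Prod.snd_add,
      Prod.fst_sum, Prod.snd_sum, Prod.smul_fst, Prod.smul_snd, smul_eq_mul]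
  set A := ∑ i, (v i).2 with hA
  by_cases hc : ∃ i, (v i).1 = 0 ∧ 0 < (v i).2
  · obtain ⟨i₀, hi₀1, hi₀2⟩ := hc
    set M := (v i₀).2 with hM
    refine ⟨M, hi₀2, fun x => ⟨b.2 + (x + M) * A + 1, fun y hy => ?_⟩⟩
    simp only [Set.mem_setOf_eq]
    rw [show (∃ l : Fin k → ℕ, (x, y) = b + ∑ i, l i • v i) ↔ _ from mem_iff x y,
        show (∃ l : Fin k → ℕ, (x, y + M) = b + ∑ i, l i • v i) ↔ _ from mem_iff x (y + M)]
    constructor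
    · rintro ⟨l, h1, h2⟩
      refine ⟨fun i => l i + (if i = i₀ then 1 else 0), ?_, ?_⟩
      · rw [h1]
        congr 1
        rw [Finset.sum_congr rfl (fun i _ => add_mul (l i) _ _), Finset.sum_add_distrib]
        simp [ite_mul, hi₀1]
      · rw [h2]
        rw [Finset.sum_congr rfl (fun i _ => add_mul (l i) _ _), Finset.sum_add_distrib]
        simp [ite_mul, hM, add_assoc]
    · rintro ⟨l, h1, h2⟩
      have hbound : ∀ i, (v i).1 ≠ 0 → l i ≤ x := by
        intro i hi
        have h1' : l i * (v i).1 ≤ ∑ j, l j * (v j).1 :=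
          Finset.single_le_sum (f := fun j => l j * (v j).1) (fun j _ => Nat.zero_le _)
            (Finset.mem_univ i)
        have h2' : l i ≤ l i * (v i).1 := Nat.le_mul_of_pos_right _ (Nat.pos_of_ne_zero hi)
        omega
      have hj : ∃ j, (v j).1 = 0 ∧ 0 < (v j).2 ∧ M ≤ l j := by
        by_contra hno
        push_neg at hno
        have hterm : ∀ i, l i * (v i).2 ≤ (x + M) * (v i).2 := by
          intro i
          rcases eq_or_ne (v i).1 0 with h0 | h0
          · rcases Nat.eq_zero_or_pos (v i).2 with h2' | h2'
            · simp [h2']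
            · have := hno i h0 h2'
              exact Nat.mul_le_mul_right _ (by omega)
          · have := hbound i h0
            exact Nat.mul_le_mul_right _ (by omega)
        have hsum : ∑ i, l i * (v i).2 ≤ (x + M) * A := by
          rw [hA, Finset.mul_sum]
          exact Finset.sum_le_sum (fun i _ => hterm i)
        omega
      obtain ⟨j, hj1, hj2, hj3⟩ := hj
      set a := (v j).2 with ha
      refine ⟨fun i => (if i = j then l i - M else l i) + (if i = i₀ then a - 1 else 0), ?_, ?_⟩
      · rw [h1]
        congr 1
        rw [Finset.sum_congr rfl (fun i _ => add_mul _ _ _), Finset.sum_add_distrib]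
        have e1 : ∑ i, (if i = j then l i - M else l i) * (v i).1 = ∑ i, l i * (v i).1 := by
          refine Finset.sum_congr rfl (fun i _ => ?_)
          split_ifs with h
          · subst h; simp [hj1]
          · rfl
        rw [e1]
        simp [ite_mul, hi₀1]
      · have key : (∑ i, (if i = j then l i - M else l i) * (v i).2) + M * a
            = ∑ i, l i * (v i).2 := by
          have e1 : ∑ i, (if i = j then M else 0) * (v i).2 = M * a := by
            simp [ite_mul, ha]
          rw [← e1, ← Finset.sum_add_distrib]
          refine Finset.sum_congr rfl (fun i _ => ?_)
          rw [← add_mul]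
          congr 1
          split_ifs with h
          · subst h; omega
          · omega
        rw [Finset.sum_congr rfl (fun i _ => add_mul _ _ _), Finset.sum_add_distrib]
        have e2 : ∑ i, (if i = i₀ then a - 1 else 0) * (v i).2 = (a - 1) * M := by
          simp [ite_mul, hM]
        rw [e2]
        have e3 : (a - 1) * M = a * M - M := by
          rw [Nat.sub_mul, one_mul]
        have e4 : M * a = a * M := Nat.mul_comm _ _
        have e5 : M ≤ a * M := Nat.le_mul_of_pos_left _ hj2
        omega
  · push_neg at hc
    refine ⟨1, le_refl 1, fun x => ⟨b.2 + x * A + 1, fun y hy => ?_⟩⟩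
    have key : ∀ z, b.2 + x * A + 1 ≤ z →
        ¬ ((x, z) ∈ {p : ℕ × ℕ | ∃ l : Fin k → ℕ, p = b + ∑ i, l i • v i}) := by
      intro z hz hmem
      rw [mem_iff] at hmem
      obtain ⟨l, h1, h2⟩ := hmem
      have hbound : ∀ i, (v i).1 ≠ 0 → l i ≤ x := by
        intro i hi
        have h1' : l i * (v i).1 ≤ ∑ j, l j * (v j).1 :=
          Finset.single_le_sum (f := fun j => l j * (v j).1) (fun j _ => Nat.zero_le _)
            (Finset.mem_univ i)
        have h2' : l i ≤ l i * (v i).1 := Nat.le_mul_of_pos_right _ (Nat.pos_of_ne_zero hi)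
        omega
      have hsum : ∑ i, l i * (v i).2 ≤ x * A := by
        rw [hA, Finset.mul_sum]
        refine Finset.sum_le_sum (fun i _ => ?_)
        rcases eq_or_ne (v i).1 0 with h0 | h0
        · simp [Nat.le_zero.mp (hc i h0)]
        · exact Nat.mul_le_mul_right _ (hbound i h0)
      omega
    simp only [Set.mem_setOf_eq]
    constructor
    · intro hmem; exact absurd hmem (key y hy)
    · intro hmem; exact absurd hmem (key (y + 1) (by omega))

theorem semilinear_uniform_fiber_period :
    (∀ S : Set (ℕ × ℕ), IsSemilinear S →
      ∃ M : ℕ, 1 ≤ M ∧ ∀ x : ℕ, EvPeriodic {y | (x, y) ∈ S} M) ∧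
    (∀ S : Set (ℕ × ℕ),
      (∀ B : ℕ, ∃ x : ℕ, ∀ M : ℕ, 1 ≤ M → M ≤ B → ¬ EvPeriodic {y | (x, y) ∈ S} M) →
      ¬ IsSemilinear S) := by
  have main : ∀ S : Set (ℕ × ℕ), IsSemilinear S →
      ∃ M : ℕ, 1 ≤ M ∧ ∀ x : ℕ, EvPeriodic {y | (x, y) ∈ S} M := by
    intro S hS
    obtain ⟨n, T, hT, rfl⟩ := hS
    choose M hM1 hM2 using fun i => linear_fiber (hT i)
    refine ⟨∏ i, M i, Finset.one_le_prod' (fun i _ => hM1 i), fun x => ?_⟩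
    have hper : ∀ i : Fin n, EvPeriodic {y | (x, y) ∈ T i} (∏ j, M j) := by
      intro i
      obtain ⟨c, hc⟩ := Finset.dvd_prod_of_mem M (Finset.mem_univ i)
      rw [hc]
      exact evp_mul (hM2 i x) c
    choose N hN using hper
    refine ⟨Finset.univ.sup N, fun y hy => ?_⟩
    simp only [Set.mem_setOf_eq, Set.mem_iUnion]
    constructor
    · rintro ⟨i, hi⟩
      exact ⟨i, (hN i y (le_trans (Finset.le_sup (Finset.mem_univ i)) hy)).mp hi⟩
    · rintro ⟨i, hi⟩
      exact ⟨i, (hN i y (le_trans (Finset.le_sup (Finset.mem_univ i)) hy)).mpr hi⟩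
  refine ⟨main, fun S hS hsemi => ?_⟩
  obtain ⟨M, hM1, hM2⟩ := main S hsemi
  obtain ⟨x, hx⟩ := hS M
  exact hx M hM1 le_rfl (hM2 x)
end

section
/- Fix y ≥ 1. The set D_y = {(x, C) ∈ ℕ² : 2^x > 3^y, C ≥ 1, (2^x - 3^y) ∣ C} is not semilinear: there is no finite collection of linear sets whose union equals D_y. -/
lemma linear_bound (S : Set (ℕ × ℕ)) (h : IsLinear S) :
    ∃ (P : ℕ) (M : ℕ → ℕ), 1 ≤ P ∧ ∀ p ∈ S, M p.1 < p.2 → (p.1, p.2 + P) ∈ S := by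
  obtain ⟨b, k, v, rfl⟩ := h
  by_cases hj : ∃ j : Fin k, (v j).1 = 0 ∧ 0 < (v j).2
  · obtain ⟨j, hj1, hj2⟩ := hj
    refine ⟨(v j).2, fun _ => 0, hj2, ?_⟩
    rintro p ⟨l, rfl⟩ -
    refine ⟨fun i => l i + if i = j then 1 else 0, ?_⟩
    have hsum : ∑ i, (l i + if i = j then 1 else 0) • v i
        = (∑ i, l i • v i) + v j := by
      have : ∀ i, (l i + if i = j then 1 else 0) • v i
          = l i • v i + (if i = j then v i else 0) := by
        intro i
        by_cases hi : i = j <;> simp [hi, add_smul]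
      rw [Finset.sum_congr rfl (fun i _ => this i), Finset.sum_add_distrib,
        Finset.sum_ite_eq' Finset.univ j (fun i => v i)]
      simp
    have hfst : ((b + ∑ i, l i • v i) + v j).1 = (b + ∑ i, l i • v i).1 := by
      simp [hj1]
    have hsnd : ((b + ∑ i, l i • v i) + v j).2 = (b + ∑ i, l i • v i).2 + (v j).2 := rfl
    rw [hsum, ← add_assoc]
    exact Prod.ext hfst.symm hsnd.symm
  · push_neg at hj
    refine ⟨1, fun x => b.2 + x * ∑ i, (v i).2, le_refl 1, ?_⟩
    rintro p ⟨l, rfl⟩ hM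
    exfalso
    set q := b + ∑ i, l i • v i with hq
    have h1 : q.1 = b.1 + ∑ i, l i * (v i).1 := by
      simp [hq, Prod.fst_sum]
    have h2 : q.2 = b.2 + ∑ i, l i * (v i).2 := by
      simp [hq, Prod.snd_sum]
    have hbound : ∑ i, l i * (v i).2 ≤ ∑ i, q.1 * (v i).2 := by
      apply Finset.sum_le_sum
      intro i _
      rcases Nat.eq_zero_or_pos (v i).1 with h0 | hpos
      · have h0' : (v i).2 = 0 := Nat.le_zero.mp (hj i h0)
        rw [h0']; simp
      · have hli : l i ≤ q.1 := by
          have : l i * (v i).1 ≤ ∑ i, l i * (v i).1 :=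
            Finset.single_le_sum (f := fun i => l i * (v i).1)
              (fun i _ => Nat.zero_le _) (Finset.mem_univ i)
          have : l i ≤ ∑ i, l i * (v i).1 :=
            le_trans (Nat.le_mul_of_pos_right _ hpos) this
          omega
        exact Nat.mul_le_mul_right _ hli
    have hM' : b.2 + q.1 * ∑ i, (v i).2 < q.2 := hM
    rw [Finset.mul_sum] at hM'
    omega

lemma iterate_step {S : Set (ℕ × ℕ)} {P : ℕ} {M : ℕ → ℕ}
    (h : ∀ p ∈ S, M p.1 < p.2 → (p.1, p.2 + P) ∈ S) :
    ∀ m : ℕ, ∀ p ∈ S, M p.1 < p.2 → (p.1, p.2 + m * P) ∈ S := by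
  intro m
  induction m with
  | zero => intro p hp _; simpa using hp
  | succ m ih =>
    intro p hp hM
    have h1 := ih p hp hM
    have h2 := h (p.1, p.2 + m * P) h1 (by simpa using Nat.lt_of_lt_of_le hM (Nat.le_add_right _ _))
    have : p.2 + (m + 1) * P = p.2 + m * P + P := by ring
    rw [this]
    exact h2

theorem divisibility_core_not_semilinear (y : ℕ) (hy : 1 ≤ y) :
    ¬ IsSemilinear {p : ℕ × ℕ | 3 ^ y < 2 ^ p.1 ∧ 1 ≤ p.2 ∧ (2 ^ p.1 - 3 ^ y) ∣ p.2} := by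
  rintro ⟨n, T, hT, hS⟩
  choose P M hP hstep using fun i => linear_bound (T i) (hT i)
  set P' : ℕ := ∏ i, P i with hP'def
  have hP' : 1 ≤ P' := Finset.one_le_prod' (fun i _ => hP i)
  set M' : ℕ → ℕ := fun x => ∑ i, M i x with hM'def
  -- uniform pumping for the union
  have hpump : ∀ p ∈ (⋃ i, T i), M' p.1 < p.2 → (p.1, p.2 + P') ∈ ⋃ i, T i := by
    intro p hp hM
    obtain ⟨i, hi⟩ := Set.mem_iUnion.mp hp
    have hMi : M i p.1 < p.2 := by
      have : M i p.1 ≤ M' p.1 :=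
        Finset.single_le_sum (f := fun j => M j p.1)
          (fun j _ => Nat.zero_le _) (Finset.mem_univ i)
      omega
    have hdvd : P i ∣ P' := Finset.dvd_prod_of_mem _ (Finset.mem_univ i)
    have := iterate_step (hstep i) (P' / P i) p hi hMi
    rw [Nat.div_mul_cancel hdvd] at this
    exact Set.mem_iUnion.mpr ⟨i, this⟩
  rw [← hS] at hpump
  -- choose x large
  set x : ℕ := 3 ^ y + P' with hx
  have hxlt : 3 ^ y + P' < 2 ^ x := Nat.lt_two_pow_self
  set d : ℕ := 2 ^ x - 3 ^ y with hd
  have hdP : P' < d := by omega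
  set C : ℕ := d * (M' x + 1) with hC
  have hmem : (x, C) ∈ {p : ℕ × ℕ | 3 ^ y < 2 ^ p.1 ∧ 1 ≤ p.2 ∧ (2 ^ p.1 - 3 ^ y) ∣ p.2} := by
    show 3 ^ y < 2 ^ x ∧ 1 ≤ C ∧ d ∣ C
    exact ⟨by omega, Nat.mul_pos (by omega) (Nat.succ_pos _), ⟨M' x + 1, rfl⟩⟩
  have hMC : M' x < C := by
    have : M' x + 1 ≤ d * (M' x + 1) := Nat.le_mul_of_pos_left _ (by omega)
    omega
  have hmem2 := hpump (x, C) hmem hMC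
  obtain ⟨-, -, hdvd2⟩ := hmem2
  have hdvd2' : d ∣ C + P' := hdvd2
  have hdvdC : d ∣ C := ⟨M' x + 1, rfl⟩
  have : d ∣ P' := (Nat.dvd_add_right hdvdC).mp hdvd2'
  have := Nat.le_of_dvd (by omega) this
  omega
end
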